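/- With U_a, U_b as above and ψ(w) defined by the two-pass product starting from e₁, if w ∈ {a,b}^n is not a palindrome, then ψ(w) ≠ e₁, and moreover the squared norm of the projection of ψ(w) onto the span of e₂ and e₃ is at least 25^{-n}. -/

import Mathlib

open Matrix

/-- The letter matrices of the Ambainis–Watrous algorithm: `U false = U_a`, `U true = U_b`. -/
noncomputable def AWU : Bool → Matrix (Fin 3) (Fin 3) ℚ
  | false => (1/5 : ℚ) • !![4, 3, 0; -3, 4, 0; 0, 0, 5]
  | true  => (1/5 : ℚ) • !![4, 0, 3; 0, 5, 0; -3, 0, 4]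

/-- `ψ(w) = U_{w_n}⁻¹ ⋯ U_{w_1}⁻¹ U_{w_n} ⋯ U_{w_1} e₁`. -/
noncomputable def AWpsi (w : List Bool) : Fin 3 → ℚ :=
  (((w.reverse.map fun c => (AWU c)⁻¹).prod) * ((w.reverse.map AWU).prod)).mulVec
    (Pi.single 0 1)

/-- Integer version of `5 • U c` acting on a vector. -/
def AWgz : Bool → (Fin 3 → ℤ) → (Fin 3 → ℤ)
  | false, v => ![4 * v 0 + 3 * v 1, -3 * v 0 + 4 * v 1, 5 * v 2]
  | true,  v => ![4 * v 0 + 3 * v 2, 5 * v 1, -3 * v 0 + 4 * v 2]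

def AWFz : List Bool → (Fin 3 → ℤ)
  | [] => ![1, 0, 0]
  | c :: l => AWgz c (AWFz l)

lemma AWFz_norm (l : List Bool) :
    AWFz l 0 ^ 2 + AWFz l 1 ^ 2 + AWFz l 2 ^ 2 = 25 ^ l.length := by
  induction l with
  | nil => simp [AWFz]
  | cons c l ih =>
    cases c <;>
      simp only [AWFz, AWgz, List.length_cons, Matrix.cons_val_zero, Matrix.cons_val_one,
        Matrix.head_cons, Matrix.cons_val_two, Matrix.tail_cons, pow_succ] <;>
      linear_combination 25 * ih

lemma AWFz_inv (c : Bool) (l : List Bool) :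
    ¬ (5 ∣ AWFz (c :: l) 0) ∧
      (if c then (5 ∣ AWFz (c :: l) 1 ∧ 5 ∣ (AWFz (c :: l) 2 - 3 * AWFz (c :: l) 0))
       else (5 ∣ AWFz (c :: l) 2 ∧ 5 ∣ (AWFz (c :: l) 1 - 3 * AWFz (c :: l) 0))) := by
  induction l generalizing c with
  | nil => cases c <;> simp [AWFz, AWgz] <;> decide
  | cons c' t ih =>
    have h := ih c'
    cases c <;> cases c' <;>
      simp only [AWFz, AWgz, Matrix.cons_val_zero, Matrix.cons_val_one, Matrix.head_cons,
        Matrix.cons_val_two, Matrix.tail_cons, if_true, if_false, Bool.false_eq_true] at h ⊢ <;>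
      omega

lemma AWFz_step_eq (c : Bool) (t t' : List Bool)
    (h : ∀ i, AWFz (c :: t) i = AWFz (c :: t') i) : ∀ i, AWFz t i = AWFz t' i := by
  have h0 := h 0; have h1 := h 1; have h2 := h 2
  cases c <;>
    simp only [AWFz, AWgz, Matrix.cons_val_zero, Matrix.cons_val_one, Matrix.head_cons,
      Matrix.cons_val_two, Matrix.tail_cons] at h0 h1 h2 <;>
  · have e0 : AWFz t 0 = AWFz t' 0 := by omega
    have e1 : AWFz t 1 = AWFz t' 1 := by omega
    have e2 : AWFz t 2 = AWFz t' 2 := by omega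
    intro i; fin_cases i
    exacts [e0, e1, e2]

lemma AWFz_step_neg (c : Bool) (t t' : List Bool)
    (h : ∀ i, AWFz (c :: t) i = - AWFz (c :: t') i) : ∀ i, AWFz t i = - AWFz t' i := by
  have h0 := h 0; have h1 := h 1; have h2 := h 2
  cases c <;>
    simp only [AWFz, AWgz, Matrix.cons_val_zero, Matrix.cons_val_one, Matrix.head_cons,
      Matrix.cons_val_two, Matrix.tail_cons] at h0 h1 h2 <;>
  · have e0 : AWFz t 0 = - AWFz t' 0 := by omega
    have e1 : AWFz t 1 = - AWFz t' 1 := by omega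
    have e2 : AWFz t 2 = - AWFz t' 2 := by omega
    intro i; fin_cases i
    exacts [e0, e1, e2]

lemma AWFz_key : ∀ l l' : List Bool, l.length = l'.length →
    ((∀ i, AWFz l i = AWFz l' i) ∨ (∀ i, AWFz l i = - AWFz l' i)) → l = l' := by
  intro l
  induction l with
  | nil => intro l' hl _; cases l' <;> simp_all
  | cons c t ih =>
    intro l' hl h
    cases l' with
    | nil => simp at hl
    | cons c' t' =>
      have hinv := AWFz_inv c t
      have hinv' := AWFz_inv c' t'
      have hcc : c = c' := by
        cases c <;> cases c' <;> simp only [if_true, if_false, Bool.false_eq_true] at hinv hinv' <;>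
          first
            | rfl
            | (exfalso; rcases h with h | h <;>
                (have h1 := h 1; have h2 := h 2) <;> omega)
      subst hcc
      have ht : (∀ i, AWFz t i = AWFz t' i) ∨ (∀ i, AWFz t i = - AWFz t' i) := by
        rcases h with h | h
        · exact Or.inl (AWFz_step_eq c t t' h)
        · exact Or.inr (AWFz_step_neg c t t' h)
      have := ih t' (by simpa using hl) ht
      rw [this]

lemma AWU_mul_transpose (c : Bool) : AWU c * (AWU c)ᵀ = 1 := by
  have h1 : (!![(4:ℚ), 3, 0; -3, 4, 0; 0, 0, 5])ᵀ = !![4, -3, 0; 3, 4, 0; 0, 0, 5] := by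
    ext i j; fin_cases i <;> fin_cases j <;> rfl
  have h2 : (!![(4:ℚ), 0, 3; 0, 5, 0; -3, 0, 4])ᵀ = !![4, 0, -3; 0, 5, 0; 3, 0, 4] := by
    ext i j; fin_cases i <;> fin_cases j <;> rfl
  cases c <;>
    simp only [AWU, Matrix.transpose_smul, h1, h2, smul_mul_assoc, Matrix.mul_smul, smul_smul,
      Matrix.mul_fin_three] <;>
    norm_num <;>
    ext i j <;> fin_cases i <;> fin_cases j <;>
    norm_num [Matrix.one_apply, Fin.ext_iff]

lemma AWU_inv (c : Bool) : (AWU c)⁻¹ = (AWU c)ᵀ :=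
  Matrix.inv_eq_right_inv (AWU_mul_transpose c)

lemma AWprod_orth (l : List Bool) :
    ((l.map AWU).prod) * ((l.map AWU).prod)ᵀ = 1 := by
  induction l with
  | nil => simp
  | cons c t ih =>
    simp only [List.map_cons, List.prod_cons, Matrix.transpose_mul]
    calc AWU c * (t.map AWU).prod * ((t.map AWU).prodᵀ * (AWU c)ᵀ)
        = AWU c * ((t.map AWU).prod * (t.map AWU).prodᵀ) * (AWU c)ᵀ := by
          noncomm_ring
      _ = 1 := by rw [ih, mul_one, AWU_mul_transpose]

lemma AWinvprod (w : List Bool) :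
    ((w.reverse.map fun c => (AWU c)⁻¹).prod) = ((w.map AWU).prod)ᵀ := by
  rw [Matrix.transpose_list_prod]
  simp [AWU_inv, List.map_map, Function.comp_def, List.map_reverse]

lemma AWprod_mulVec (l : List Bool) :
    ((l.map AWU).prod).mulVec (Pi.single 0 1) = fun i => (AWFz l i : ℚ) / 5 ^ l.length := by
  induction l with
  | nil => funext i; fin_cases i <;> simp [AWFz] <;> rfl
  | cons c t ih =>
    simp only [List.map_cons, List.prod_cons, ← Matrix.mulVec_mulVec, ih]
    funext i
    cases c <;> fin_cases i <;>
      simp [AWU, AWFz, AWgz, Matrix.mulVec, dotProduct, Fin.sum_univ_three,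
        List.length_cons, pow_succ] <;>
      push_cast <;> ring



lemma AWsq3_zero {a b c : ℤ} (h : a ^ 2 + b ^ 2 + c ^ 2 = 0) : a = 0 ∧ b = 0 ∧ c = 0 := by
  have ha := sq_nonneg a
  have hb := sq_nonneg b
  have hc := sq_nonneg c
  refine ⟨?_, ?_, ?_⟩ <;>
  · rw [← pow_eq_zero_iff (n := 2) two_ne_zero]
    linarith

theorem AW_nonpalindrome_detected (w : List Bool) (hpal : w.reverse ≠ w) :
    AWpsi w ≠ Pi.single 0 1 ∧
    (AWpsi w 1) ^ 2 + (AWpsi w 2) ^ 2 ≥ 1 / 25 ^ w.length := by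
  set n := w.length with hn
  set C := (w.map AWU).prod with hC
  set u : Fin 3 → ℤ := AWFz w.reverse with hu_def
  set v : Fin 3 → ℤ := AWFz w with hv_def
  have hrevlen : w.reverse.length = n := by simp [hn]
  have hpsi : AWpsi w = Cᵀ.mulVec (fun j => (u j : ℚ) / 5 ^ n) := by
    rw [AWpsi, AWinvprod w, ← Matrix.mulVec_mulVec, AWprod_mulVec w.reverse, hrevlen]
  have hC0 : ∀ j, C j 0 = (v j : ℚ) / 5 ^ n := by
    intro j
    have h := congrFun (AWprod_mulVec w) j
    simpa [Matrix.mulVec_single, hn] using h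
  set S : ℤ := v 0 * u 0 + v 1 * u 1 + v 2 * u 2 with hS_def
  have h25 : ((25 : ℚ)) ^ n = 5 ^ n * 5 ^ n := by
    rw [← mul_pow]; norm_num
  have hpsi0 : AWpsi w 0 = (S : ℚ) / 25 ^ n := by
    rw [hpsi]
    show (Cᵀ *ᵥ fun j => (u j : ℚ) / 5 ^ n) 0 = _
    simp only [Matrix.mulVec, dotProduct, Fin.sum_univ_three, Matrix.transpose_apply,
      hC0, hS_def, h25]
    push_cast
    field_simp
    try ring
  -- norms
  have huq : (fun j => (u j : ℚ) / 5 ^ n) ⬝ᵥ (fun j => (u j : ℚ) / 5 ^ n) = 1 := by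
    have hiu : u 0 ^ 2 + u 1 ^ 2 + u 2 ^ 2 = 25 ^ n := by
      rw [hu_def, ← hrevlen]; exact AWFz_norm w.reverse
    simp only [dotProduct, Fin.sum_univ_three]
    have h5 : ((5 : ℚ)) ^ n ≠ 0 := by positivity
    field_simp
    have hcq : ((u 0 : ℚ)) ^ 2 + (u 1 : ℚ) ^ 2 + (u 2 : ℚ) ^ 2 = 25 ^ n := by
      exact_mod_cast hiu
    linear_combination hcq + h25
  have hnorm : AWpsi w 0 ^ 2 + AWpsi w 1 ^ 2 + AWpsi w 2 ^ 2 = 1 := by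
    have key : (Cᵀ.mulVec fun j => (u j : ℚ) / 5 ^ n) ⬝ᵥ
        (Cᵀ.mulVec fun j => (u j : ℚ) / 5 ^ n) = 1 := by
      rw [Matrix.dotProduct_mulVec, Matrix.vecMul_transpose, Matrix.mulVec_mulVec,
        AWprod_orth w, Matrix.one_mulVec, huq]
    rw [hpsi]
    simpa [dotProduct, Fin.sum_univ_three, sq] using key
  -- integer facts
  have hiu : u 0 ^ 2 + u 1 ^ 2 + u 2 ^ 2 = 25 ^ n := by
    rw [hu_def, ← hrevlen]; exact AWFz_norm w.reverse
  have hiv : v 0 ^ 2 + v 1 ^ 2 + v 2 ^ 2 = 25 ^ n := by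
    rw [hv_def, hn]; exact AWFz_norm w
  have hkey : ¬ ((∀ i, v i = u i) ∨ (∀ i, v i = - u i)) := by
    intro h
    exact hpal ((AWFz_key w w.reverse (by simp)) h).symm
  have hSne1 : S ≠ 25 ^ n := by
    intro hS
    apply hkey; left
    have hz : (v 0 - u 0) ^ 2 + (v 1 - u 1) ^ 2 + (v 2 - u 2) ^ 2 = 0 := by
      linear_combination hiv + hiu - 2 * hS
    obtain ⟨e0, e1, e2⟩ := AWsq3_zero hz
    intro i; fin_cases i
    exacts [sub_eq_zero.mp e0, sub_eq_zero.mp e1, sub_eq_zero.mp e2]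
  have hSne2 : S ≠ - 25 ^ n := by
    intro hS
    apply hkey; right
    have hz : (v 0 + u 0) ^ 2 + (v 1 + u 1) ^ 2 + (v 2 + u 2) ^ 2 = 0 := by
      linear_combination hiv + hiu + 2 * hS
    obtain ⟨e0, e1, e2⟩ := AWsq3_zero hz
    intro i; fin_cases i
    exacts [eq_neg_of_add_eq_zero_left e0, eq_neg_of_add_eq_zero_left e1,
      eq_neg_of_add_eq_zero_left e2]
  have hSle' : S ≤ 25 ^ n := by
    nlinarith [sq_nonneg (v 0 - u 0), sq_nonneg (v 1 - u 1), sq_nonneg (v 2 - u 2)]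
  have hSge' : - 25 ^ n ≤ S := by
    nlinarith [sq_nonneg (v 0 + u 0), sq_nonneg (v 1 + u 1), sq_nonneg (v 2 + u 2)]
  have hSle : S ≤ 25 ^ n - 1 := by
    rcases lt_or_eq_of_le hSle' with h | h
    · exact Int.le_sub_one_iff.mpr h
    · exact absurd h hSne1
  have hSge : - (25 ^ n - 1) ≤ S := by
    rcases lt_or_eq_of_le hSge' with h | h
    · linarith
    · exact absurd h.symm hSne2
  set K : ℚ := (25 : ℚ) ^ n with hK_def
  have hK1 : (1 : ℚ) ≤ K := by
    rw [hK_def]; exact one_le_pow₀ (by norm_num)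
  have hK0 : (0 : ℚ) < K := by positivity
  have hcast : ((25 ^ n : ℤ) : ℚ) = K := by push_cast [hK_def]; ring
  have hSq_le : (S : ℚ) ≤ K - 1 := by
    rw [← hcast]; exact_mod_cast hSle
  have hSq_ge : - (K - 1) ≤ (S : ℚ) := by
    rw [← hcast]; exact_mod_cast hSge
  clear_value S K u v C n
  constructor
  · intro h
    have h0 := congrFun h 0
    rw [hpsi0] at h0
    simp only [Pi.single_eq_same] at h0
    rw [div_eq_one_iff_eq (ne_of_gt hK0)] at h0
    exact hSne1 (by exact_mod_cast h0.trans hcast.symm)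
  · have hval : AWpsi w 1 ^ 2 + AWpsi w 2 ^ 2 = 1 - ((S : ℚ) / K) ^ 2 := by
      rw [← hpsi0]; linarith [hnorm]
    have hexp : 1 - ((S : ℚ) / K) ^ 2 = (K ^ 2 - (S : ℚ) ^ 2) / K ^ 2 := by
      field_simp
    have hq : ((S : ℚ)) ^ 2 ≤ (K - 1) ^ 2 := by nlinarith [hSq_le, hSq_ge]
    rw [ge_iff_le, hval, hexp]
    rw [div_le_div_iff₀ hK0 (by positivity)]
    have h2 : K ≤ K ^ 2 - (S : ℚ) ^ 2 := by nlinarith [hq, hK1]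
    have h3 := mul_le_mul_of_nonneg_right h2 hK0.le
    have h4 : K * K = K ^ 2 := by ring
    linarith [h3, h4]
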